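/- Let k1, k2, k3 > 0 and K = diag(k1,k2,k3). Let x ∈ ℝ³ with x ≠ 0, set θ = ‖x‖, u = x/θ, and let G = I₃ + sin(θ)·û + (1 − cos(θ))·û², where û is the hat map of u. Then (1/2)·tr(K(I₃ − G)) = ((1 − cos θ)/(2‖x‖²))·[(k2+k3)·x1² + (k1+k3)·x2² + (k1+k2)·x3²]. -/
import Mathlib

open Matrix

noncomputable section

/-- Euclidean norm on ℝ³. -/
def euclNorm (x : Fin 3 → ℝ) : ℝ := Real.sqrt (∑ i, x i ^ 2)

/-- The hat map: sends `x ∈ ℝ³` to the skew-symmetric matrix `x̂`. -/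
def hat (x : Fin 3 → ℝ) : Matrix (Fin 3) (Fin 3) ℝ :=
  !![0, -x 2, x 1; x 2, 0, -x 0; -x 1, x 0, 0]

theorem stmt7 (k1 k2 k3 : ℝ)
    (hk1 : 0 < k1) (hk2 : 0 < k2) (hk3 : 0 < k3)
    (K : Matrix (Fin 3) (Fin 3) ℝ) (hK : K = Matrix.diagonal ![k1, k2, k3])
    (x : Fin 3 → ℝ) (hx : x ≠ 0)
    (θ : ℝ) (hθ : θ = euclNorm x)
    (u : Fin 3 → ℝ) (hu : u = θ⁻¹ • x)
    (G : Matrix (Fin 3) (Fin 3) ℝ)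
    (hG : G = 1 + Real.sin θ • hat u + (1 - Real.cos θ) • (hat u * hat u)) :
    (1 / 2) * (K * (1 - G)).trace =
      ((1 - Real.cos θ) / (2 * euclNorm x ^ 2)) *
        ((k2 + k3) * x 0 ^ 2 + (k1 + k3) * x 1 ^ 2 + (k1 + k2) * x 2 ^ 2) := by
  have hsum : (0:ℝ) < x 0 ^ 2 + x 1 ^ 2 + x 2 ^ 2 := by
    by_contra h
    push_neg at h
    have h0 : x 0 = 0 := by nlinarith [sq_nonneg (x 0), sq_nonneg (x 1), sq_nonneg (x 2)]
    have h1 : x 1 = 0 := by nlinarith [sq_nonneg (x 0), sq_nonneg (x 1), sq_nonneg (x 2)]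
    have h2 : x 2 = 0 := by nlinarith [sq_nonneg (x 0), sq_nonneg (x 1), sq_nonneg (x 2)]
    apply hx
    funext i
    fin_cases i
    · exact h0
    · exact h1
    · exact h2
  have hθ2 : θ ^ 2 = x 0 ^ 2 + x 1 ^ 2 + x 2 ^ 2 := by
    rw [hθ, euclNorm, Fin.sum_univ_three]
    rw [Real.sq_sqrt (by positivity)]
  have hθpos : 0 < θ := by
    rw [hθ, euclNorm]
    apply Real.sqrt_pos.mpr
    rw [Fin.sum_univ_three]; exact hsum
  have hθne : θ ≠ 0 := ne_of_gt hθpos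
  have hEN : euclNorm x = θ := hθ.symm
  subst hK hu hG
  rw [hEN]
  rw [Matrix.trace]
  simp [Matrix.diag, Matrix.mul_apply, hat, Fin.sum_univ_three, Matrix.one_apply]
  field_simp
  nlinarith [hθ2, sq_nonneg θ, hsum, Real.cos_le_one θ]
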